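/- In the formal power series ring ℚ⟦q⟧ one has the identity E₆ = C₂·(4C₂² − 3E₄), where E₄ = 1 + 240 Σ_{n≥1} σ₃(n)qⁿ, E₆ = 1 − 504 Σ_{n≥1} σ₅(n)qⁿ, and C₂ = 1 + 24 Σ_{n≥1} τ₂(n)qⁿ with τ₂(n) = Σ_{d∣n, 2∤d} d. -/

import Mathlib

/-- `σₖ(n) = Σ_{d ∣ n} dᵏ`, the sum of the `k`-th powers of the divisors of `n`. -/
def sigmaFn (k n : ℕ) : ℕ := ∑ d ∈ n.divisors, d ^ k

/-- `τ_N(n) = Σ_{d ∣ n, N ∤ d} d`, the sum of the divisors of `n` not divisible by `N`. -/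
def tauFn (N n : ℕ) : ℕ := ∑ d ∈ n.divisors.filter (fun d => ¬ N ∣ d), d

/-- `E₄ = 1 + 240 Σ_{n≥1} σ₃(n) qⁿ ∈ ℚ⟦q⟧`. -/
noncomputable def E4Q : PowerSeries ℚ :=
  PowerSeries.mk fun n => if n = 0 then 1 else 240 * sigmaFn 3 n

/-- `E₆ = 1 - 504 Σ_{n≥1} σ₅(n) qⁿ ∈ ℚ⟦q⟧`. -/
noncomputable def E6Q : PowerSeries ℚ :=
  PowerSeries.mk fun n => if n = 0 then 1 else -504 * sigmaFn 5 n

/-- `C₂ = 1 + 24 Σ_{n≥1} τ₂(n) qⁿ ∈ ℚ⟦q⟧`. -/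
noncomputable def C2Q : PowerSeries ℚ :=
  PowerSeries.mk fun n => if n = 0 then 1 else 24 * tauFn 2 n

namespace E6Aux

/-! ### Elementary weight functions -/

/-- odd indicator -/
def ind (a : ℕ) : ℚ := if a % 2 = 1 then 1 else 0

def o1 (d : ℕ) : ℚ := ind d * d
def p3 (d : ℕ) : ℚ := (d : ℚ) ^ 3
def p5 (d : ℕ) : ℚ := (d : ℚ) ^ 5
def v3 (d : ℕ) : ℚ := (1 - ind d) * (d : ℚ) ^ 3
def v5 (d : ℕ) : ℚ := (1 - ind d) * (d : ℚ) ^ 5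

/-- Liouville weight for the `τ₂ * τ₂` convolution. -/
def wW (a b : ℕ) : ℚ := ind a * (b : ℚ) ^ 2 + ind a * ind b * ((a : ℚ) * b)

/-- Liouville weight for the `τ₂ * σ₃` convolution. -/
def wU (a b : ℕ) : ℚ :=
  ind a * (b : ℚ) ^ 4 + 2 * ind a * ((a : ℚ) * (b : ℚ) ^ 3)
    + 2 * (1 - ind a) * ind b * ((a : ℚ) ^ 2 * (b : ℚ) ^ 2)
    + ind a * ind b * ((a : ℚ) ^ 2 * (b : ℚ) ^ 2)

/-- Liouville weight for the `τ₂ * (even σ₃)` convolution. -/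
def wV (a b : ℕ) : ℚ :=
  ind a * (b : ℚ) ^ 4 + 4 * ind a * (1 - ind b) * ((a : ℚ) * (b : ℚ) ^ 3)
    + 4 * (1 - ind a) * ind b * ((a : ℚ) ^ 2 * (b : ℚ) ^ 2)
    - ind a * ind b * ((a : ℚ) ^ 2 * (b : ℚ) ^ 2)

/-! ### Faulhaber summation -/

lemma sum_poly4 (e : ℕ) (c0 c1 c2 c3 c4 : ℚ) :
    ∑ k ∈ Finset.range e,
        (c0 + c1 * (k : ℚ) + c2 * (k : ℚ) ^ 2 + c3 * (k : ℚ) ^ 3 + c4 * (k : ℚ) ^ 4)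
      = c0 * e + c1 * ((e : ℚ) ^ 2 - e) / 2 + c2 * (2 * (e : ℚ) ^ 3 - 3 * (e : ℚ) ^ 2 + e) / 6
        + c3 * ((e : ℚ) ^ 4 - 2 * (e : ℚ) ^ 3 + (e : ℚ) ^ 2) / 4
        + c4 * (6 * (e : ℚ) ^ 5 - 15 * (e : ℚ) ^ 4 + 10 * (e : ℚ) ^ 3 - (e : ℚ)) / 30 := by
  induction e with
  | zero => simp
  | succ m ih =>
    rw [Finset.sum_range_succ, ih]
    push_cast
    ring

lemma sum_range_double (f : ℕ → ℚ) (e : ℕ) :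
    ∑ a ∈ Finset.range (2 * e), f a = ∑ k ∈ Finset.range e, (f (2 * k) + f (2 * k + 1)) := by
  induction e with
  | zero => simp
  | succ m ih =>
    have h : 2 * (m + 1) = 2 * m + 1 + 1 := by ring
    rw [h, Finset.sum_range_succ, Finset.sum_range_succ, ih, Finset.sum_range_succ]
    ring

/-! ### Inner divisor-sum evaluations -/

lemma gW_eval (d : ℕ) :
    ∑ a ∈ Finset.range d, wW a (d - a)
      = if d % 2 = 1 then ((d : ℚ) ^ 3 - d) / 6 else (d : ℚ) ^ 3 / 4 := by
  rcases Nat.even_or_odd d with h | h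
  · obtain ⟨e, rfl⟩ := h
    have h2 : e + e = 2 * e := by ring
    rw [h2, if_neg (by omega : ¬ (2 * e) % 2 = 1), sum_range_double]
    have key : ∀ k ∈ Finset.range e,
        wW (2 * k) (2 * e - 2 * k) + wW (2 * k + 1) (2 * e - (2 * k + 1))
          = (4 * (e : ℚ) ^ 2 - 2 * e) + (-4 * (e : ℚ)) * (k : ℚ) + 0 * (k : ℚ) ^ 2
            + 0 * (k : ℚ) ^ 3 + 0 * (k : ℚ) ^ 4 := by
      intro k hk
      have hk' : k < e := Finset.mem_range.mp hk
      have e2 : ((2 * e - (2 * k + 1) : ℕ) : ℚ) = 2 * e - 2 * k - 1 := by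
        rw [Nat.cast_sub (by omega : 2 * k + 1 ≤ 2 * e)]; push_cast; ring
      simp only [wW, ind,
        if_neg (by omega : ¬ (2 * k) % 2 = 1),
        if_pos (by omega : (2 * k + 1) % 2 = 1),
        if_neg (by omega : ¬ (2 * e - 2 * k) % 2 = 1),
        if_pos (by omega : (2 * e - (2 * k + 1)) % 2 = 1)]
      rw [e2]
      push_cast
      ring
    rw [Finset.sum_congr rfl key, sum_poly4]
    push_cast; ring
  · obtain ⟨e, rfl⟩ := h
    rw [if_pos (by omega : (2 * e + 1) % 2 = 1), Finset.sum_range_succ, sum_range_double]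
    have hb : wW (2 * e) (2 * e + 1 - 2 * e) = 0 := by
      simp [wW, ind, if_neg (by omega : ¬ (2 * e) % 2 = 1)]
    have key : ∀ k ∈ Finset.range e,
        wW (2 * k) (2 * e + 1 - 2 * k) + wW (2 * k + 1) (2 * e + 1 - (2 * k + 1))
          = (4 * (e : ℚ) ^ 2) + (-8 * (e : ℚ)) * (k : ℚ) + 4 * (k : ℚ) ^ 2
            + 0 * (k : ℚ) ^ 3 + 0 * (k : ℚ) ^ 4 := by
      intro k hk
      have hk' : k < e := Finset.mem_range.mp hk
      have e2 : ((2 * e + 1 - (2 * k + 1) : ℕ) : ℚ) = 2 * e - 2 * k := by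
        rw [Nat.cast_sub (by omega : 2 * k + 1 ≤ 2 * e + 1)]; push_cast; ring
      simp only [wW, ind,
        if_neg (by omega : ¬ (2 * k) % 2 = 1),
        if_pos (by omega : (2 * k + 1) % 2 = 1),
        if_pos (by omega : (2 * e + 1 - 2 * k) % 2 = 1),
        if_neg (by omega : ¬ (2 * e + 1 - (2 * k + 1)) % 2 = 1)]
      rw [e2]
      push_cast
      ring
    rw [Finset.sum_congr rfl key, sum_poly4, hb]
    push_cast; ring

lemma gU_eval (d : ℕ) :
    ∑ a ∈ Finset.range d, wU a (d - a)
      = if d % 2 = 1 then (11 * (d : ℚ) ^ 5 - 10 * (d : ℚ) ^ 3 - d) / 60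
        else ((d : ℚ) ^ 5 - (d : ℚ) ^ 3) / 6 := by
  rcases Nat.even_or_odd d with h | h
  · obtain ⟨e, rfl⟩ := h
    have h2 : e + e = 2 * e := by ring
    rw [h2, if_neg (by omega : ¬ (2 * e) % 2 = 1), sum_range_double]
    have key : ∀ k ∈ Finset.range e,
        wU (2 * k) (2 * e - 2 * k) + wU (2 * k + 1) (2 * e - (2 * k + 1))
          = (4 * (e : ℚ) ^ 2 - 16 * (e : ℚ) ^ 3 + 16 * (e : ℚ) ^ 4)
            + (16 * (e : ℚ) ^ 2 - 32 * (e : ℚ) ^ 3) * (k : ℚ)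
            + (16 * (e : ℚ) ^ 2) * (k : ℚ) ^ 2 + 0 * (k : ℚ) ^ 3 + 0 * (k : ℚ) ^ 4 := by
      intro k hk
      have hk' : k < e := Finset.mem_range.mp hk
      have e1 : ((2 * e - 2 * k : ℕ) : ℚ) = 2 * e - 2 * k := by
        rw [Nat.cast_sub (by omega : 2 * k ≤ 2 * e)]; push_cast; ring
      have e2 : ((2 * e - (2 * k + 1) : ℕ) : ℚ) = 2 * e - 2 * k - 1 := by
        rw [Nat.cast_sub (by omega : 2 * k + 1 ≤ 2 * e)]; push_cast; ring
      simp only [wU, ind,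
        if_neg (by omega : ¬ (2 * k) % 2 = 1),
        if_pos (by omega : (2 * k + 1) % 2 = 1),
        if_neg (by omega : ¬ (2 * e - 2 * k) % 2 = 1),
        if_pos (by omega : (2 * e - (2 * k + 1)) % 2 = 1)]
      rw [e1, e2]
      push_cast
      ring
    rw [Finset.sum_congr rfl key, sum_poly4]
    push_cast; ring
  · obtain ⟨e, rfl⟩ := h
    rw [if_pos (by omega : (2 * e + 1) % 2 = 1), Finset.sum_range_succ, sum_range_double]
    have hb : wU (2 * e) (2 * e + 1 - 2 * e) = 8 * (e : ℚ) ^ 2 := by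
      have h1 : 2 * e + 1 - 2 * e = 1 := by omega
      rw [h1]
      simp only [wU, ind, if_neg (by omega : ¬ (2 * e) % 2 = 1),
        if_pos (by omega : (1 : ℕ) % 2 = 1)]
      push_cast; ring
    have key : ∀ k ∈ Finset.range e,
        wU (2 * k) (2 * e + 1 - 2 * k) + wU (2 * k + 1) (2 * e + 1 - (2 * k + 1))
          = (16 * (e : ℚ) ^ 3 + 16 * (e : ℚ) ^ 4)
            + (-48 * (e : ℚ) ^ 2 - 32 * (e : ℚ) ^ 3) * (k : ℚ)
            + (8 + 80 * (e : ℚ) + 32 * (e : ℚ) ^ 2) * (k : ℚ) ^ 2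
            + (-48 - 32 * (e : ℚ)) * (k : ℚ) ^ 3 + 16 * (k : ℚ) ^ 4 := by
      intro k hk
      have hk' : k < e := Finset.mem_range.mp hk
      have e1 : ((2 * e + 1 - 2 * k : ℕ) : ℚ) = 2 * e + 1 - 2 * k := by
        rw [Nat.cast_sub (by omega : 2 * k ≤ 2 * e + 1)]; push_cast; ring
      have e2 : ((2 * e + 1 - (2 * k + 1) : ℕ) : ℚ) = 2 * e - 2 * k := by
        rw [Nat.cast_sub (by omega : 2 * k + 1 ≤ 2 * e + 1)]; push_cast; ring
      simp only [wU, ind,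
        if_neg (by omega : ¬ (2 * k) % 2 = 1),
        if_pos (by omega : (2 * k + 1) % 2 = 1),
        if_pos (by omega : (2 * e + 1 - 2 * k) % 2 = 1),
        if_neg (by omega : ¬ (2 * e + 1 - (2 * k + 1)) % 2 = 1)]
      rw [e1, e2]
      push_cast
      ring
    rw [Finset.sum_congr rfl key, sum_poly4, hb]
    push_cast; ring

lemma gV_eval (d : ℕ) :
    ∑ a ∈ Finset.range d, wV a (d - a)
      = if d % 2 = 1 then (4 : ℚ) / 15 * ((d : ℚ) ^ 5 - d)
        else ((d : ℚ) ^ 5 - 4 * (d : ℚ) ^ 3) / 12 := by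
  rcases Nat.even_or_odd d with h | h
  · obtain ⟨e, rfl⟩ := h
    have h2 : e + e = 2 * e := by ring
    rw [h2, if_neg (by omega : ¬ (2 * e) % 2 = 1), sum_range_double]
    have key : ∀ k ∈ Finset.range e,
        wV (2 * k) (2 * e - 2 * k) + wV (2 * k + 1) (2 * e - (2 * k + 1))
          = (-4 * (e : ℚ) + 20 * (e : ℚ) ^ 2 - 32 * (e : ℚ) ^ 3 + 16 * (e : ℚ) ^ 4)
            + (-24 * (e : ℚ) + 80 * (e : ℚ) ^ 2 - 64 * (e : ℚ) ^ 3) * (k : ℚ)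
            + (-48 * (e : ℚ) + 80 * (e : ℚ) ^ 2) * (k : ℚ) ^ 2
            + (-32 * (e : ℚ)) * (k : ℚ) ^ 3 + 0 * (k : ℚ) ^ 4 := by
      intro k hk
      have hk' : k < e := Finset.mem_range.mp hk
      have e1 : ((2 * e - 2 * k : ℕ) : ℚ) = 2 * e - 2 * k := by
        rw [Nat.cast_sub (by omega : 2 * k ≤ 2 * e)]; push_cast; ring
      have e2 : ((2 * e - (2 * k + 1) : ℕ) : ℚ) = 2 * e - 2 * k - 1 := by
        rw [Nat.cast_sub (by omega : 2 * k + 1 ≤ 2 * e)]; push_cast; ring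
      simp only [wV, ind,
        if_neg (by omega : ¬ (2 * k) % 2 = 1),
        if_pos (by omega : (2 * k + 1) % 2 = 1),
        if_neg (by omega : ¬ (2 * e - 2 * k) % 2 = 1),
        if_pos (by omega : (2 * e - (2 * k + 1)) % 2 = 1)]
      rw [e1, e2]
      push_cast
      ring
    rw [Finset.sum_congr rfl key, sum_poly4]
    push_cast; ring
  · obtain ⟨e, rfl⟩ := h
    rw [if_pos (by omega : (2 * e + 1) % 2 = 1), Finset.sum_range_succ, sum_range_double]
    have hb : wV (2 * e) (2 * e + 1 - 2 * e) = 16 * (e : ℚ) ^ 2 := by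
      have h1 : 2 * e + 1 - 2 * e = 1 := by omega
      rw [h1]
      simp only [wV, ind, if_neg (by omega : ¬ (2 * e) % 2 = 1),
        if_pos (by omega : (1 : ℕ) % 2 = 1)]
      push_cast; ring
    have key : ∀ k ∈ Finset.range e,
        wV (2 * k) (2 * e + 1 - 2 * k) + wV (2 * k + 1) (2 * e + 1 - (2 * k + 1))
          = (32 * (e : ℚ) ^ 3 + 16 * (e : ℚ) ^ 4)
            + (-96 * (e : ℚ) ^ 2) * (k : ℚ)
            + (16 + 160 * (e : ℚ) - 32 * (e : ℚ) ^ 2) * (k : ℚ) ^ 2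
            + (-96 : ℚ) * (k : ℚ) ^ 3 + 16 * (k : ℚ) ^ 4 := by
      intro k hk
      have hk' : k < e := Finset.mem_range.mp hk
      have e1 : ((2 * e + 1 - 2 * k : ℕ) : ℚ) = 2 * e + 1 - 2 * k := by
        rw [Nat.cast_sub (by omega : 2 * k ≤ 2 * e + 1)]; push_cast; ring
      have e2 : ((2 * e + 1 - (2 * k + 1) : ℕ) : ℚ) = 2 * e - 2 * k := by
        rw [Nat.cast_sub (by omega : 2 * k + 1 ≤ 2 * e + 1)]; push_cast; ring
      simp only [wV, ind,
        if_neg (by omega : ¬ (2 * k) % 2 = 1),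
        if_pos (by omega : (2 * k + 1) % 2 = 1),
        if_pos (by omega : (2 * e + 1 - 2 * k) % 2 = 1),
        if_neg (by omega : ¬ (2 * e + 1 - (2 * k + 1)) % 2 = 1)]
      rw [e1, e2]
      push_cast
      ring
    rw [Finset.sum_congr rfl key, sum_poly4, hb]
    push_cast; ring


/-- The set of quadruples `(a,b,x,y)` of positive integers with `a*x + b*y = n`. -/
def Qset (n : ℕ) : Finset (ℕ × ℕ × ℕ × ℕ) :=
  (Finset.range (n + 1) ×ˢ Finset.range (n + 1) ×ˢ Finset.range (n + 1) ×ˢ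
    Finset.range (n + 1)).filter
    (fun p => 0 < p.1 ∧ 0 < p.2.1 ∧ 0 < p.2.2.1 ∧ 0 < p.2.2.2 ∧
      p.1 * p.2.2.1 + p.2.1 * p.2.2.2 = n)

lemma mem_Qset {n a b x y : ℕ} :
    (a, b, x, y) ∈ Qset n ↔ 0 < a ∧ 0 < b ∧ 0 < x ∧ 0 < y ∧ a * x + b * y = n := by
  simp only [Qset, Finset.mem_filter, Finset.mem_product, Finset.mem_range]
  constructor
  · rintro ⟨-, h⟩; exact h
  · rintro ⟨ha, hb, hx, hy, h⟩
    have h1 : a ≤ a * x := Nat.le_mul_of_pos_right a hx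
    have h2 : b ≤ b * y := Nat.le_mul_of_pos_right b hy
    have h3 : x ≤ a * x := Nat.le_mul_of_pos_left x ha
    have h4 : y ≤ b * y := Nat.le_mul_of_pos_left y hb
    exact ⟨⟨by omega, by omega, by omega, by omega⟩, ha, hb, hx, hy, h⟩

/-- Bijection `{x > y} ≃ {a < b}` : `(a,b,x,y) ↦ (a, a+b, x−y, y)`. -/
lemma sum_xgty (n : ℕ) (F : ℕ × ℕ × ℕ × ℕ → ℚ) :
    ∑ p ∈ (Qset n).filter (fun p => p.2.2.2 < p.2.2.1), F p
      = ∑ p ∈ (Qset n).filter (fun p => p.1 < p.2.1),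
          F (p.1, p.2.1 - p.1, p.2.2.1 + p.2.2.2, p.2.2.2) := by
  refine Finset.sum_nbij' (i := fun p => (p.1, p.1 + p.2.1, p.2.2.1 - p.2.2.2, p.2.2.2))
    (j := fun p => (p.1, p.2.1 - p.1, p.2.2.1 + p.2.2.2, p.2.2.2)) ?_ ?_ ?_ ?_ ?_
  · rintro ⟨a, b, x, y⟩ hp
    simp only [Finset.mem_filter, mem_Qset] at hp ⊢
    obtain ⟨⟨ha, hb, hx, hy, heq⟩, hlt⟩ := hp
    refine ⟨⟨ha, by omega, by omega, hy, ?_⟩, by omega⟩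
    have hxy : x - y + y = x := by omega
    calc a * (x - y) + (a + b) * y = a * ((x - y) + y) + b * y := by ring
      _ = n := by rw [hxy]; exact heq
  · rintro ⟨a, b, x, y⟩ hp
    simp only [Finset.mem_filter, mem_Qset] at hp ⊢
    obtain ⟨⟨ha, hb, hx, hy, heq⟩, hlt⟩ := hp
    refine ⟨⟨ha, by omega, by omega, hy, ?_⟩, by omega⟩
    have hba : b - a + a = b := by omega
    calc a * (x + y) + (b - a) * y = a * x + ((b - a) + a) * y := by ring
      _ = n := by rw [hba]; exact heq
  · rintro ⟨a, b, x, y⟩ hp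
    simp only [Finset.mem_filter, mem_Qset] at hp
    obtain ⟨⟨ha, hb, hx, hy, heq⟩, hlt⟩ := hp
    simp only [Prod.mk.injEq]
    exact ⟨trivial, by omega, by omega, trivial⟩
  · rintro ⟨a, b, x, y⟩ hp
    simp only [Finset.mem_filter, mem_Qset] at hp
    obtain ⟨⟨ha, hb, hx, hy, heq⟩, hlt⟩ := hp
    simp only [Prod.mk.injEq]
    exact ⟨trivial, by omega, by omega, trivial⟩
  · rintro ⟨a, b, x, y⟩ hp
    simp only [Finset.mem_filter, mem_Qset] at hp
    obtain ⟨⟨ha, hb, hx, hy, heq⟩, hlt⟩ := hp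
    have h1 : a + b - a = b := by omega
    have h2 : x - y + y = x := by omega
    rw [h1, h2]

/-- Bijection `{x < y} ≃ {a > b}` : `(a,b,x,y) ↦ (a+b, b, x, y−x)`. -/
lemma sum_xlty (n : ℕ) (F : ℕ × ℕ × ℕ × ℕ → ℚ) :
    ∑ p ∈ (Qset n).filter (fun p => p.2.2.1 < p.2.2.2), F p
      = ∑ p ∈ (Qset n).filter (fun p => p.2.1 < p.1),
          F (p.1 - p.2.1, p.2.1, p.2.2.1, p.2.2.2 + p.2.2.1) := by
  refine Finset.sum_nbij' (i := fun p => (p.1 + p.2.1, p.2.1, p.2.2.1, p.2.2.2 - p.2.2.1))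
    (j := fun p => (p.1 - p.2.1, p.2.1, p.2.2.1, p.2.2.2 + p.2.2.1)) ?_ ?_ ?_ ?_ ?_
  · rintro ⟨a, b, x, y⟩ hp
    simp only [Finset.mem_filter, mem_Qset] at hp ⊢
    obtain ⟨⟨ha, hb, hx, hy, heq⟩, hlt⟩ := hp
    refine ⟨⟨by omega, hb, hx, by omega, ?_⟩, by omega⟩
    have hxy : y - x + x = y := by omega
    calc (a + b) * x + b * (y - x) = a * x + b * ((y - x) + x) := by ring
      _ = n := by rw [hxy]; exact heq
  · rintro ⟨a, b, x, y⟩ hp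
    simp only [Finset.mem_filter, mem_Qset] at hp ⊢
    obtain ⟨⟨ha, hb, hx, hy, heq⟩, hlt⟩ := hp
    refine ⟨⟨by omega, hb, hx, by omega, ?_⟩, by omega⟩
    have hab : a - b + b = a := by omega
    calc (a - b) * x + b * (y + x) = ((a - b) + b) * x + b * y := by ring
      _ = n := by rw [hab]; exact heq
  · rintro ⟨a, b, x, y⟩ hp
    simp only [Finset.mem_filter, mem_Qset] at hp
    obtain ⟨⟨ha, hb, hx, hy, heq⟩, hlt⟩ := hp
    simp only [Prod.mk.injEq]
    exact ⟨by omega, trivial, trivial, by omega⟩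
  · rintro ⟨a, b, x, y⟩ hp
    simp only [Finset.mem_filter, mem_Qset] at hp
    obtain ⟨⟨ha, hb, hx, hy, heq⟩, hlt⟩ := hp
    simp only [Prod.mk.injEq]
    exact ⟨by omega, trivial, trivial, by omega⟩
  · rintro ⟨a, b, x, y⟩ hp
    simp only [Finset.mem_filter, mem_Qset] at hp
    obtain ⟨⟨ha, hb, hx, hy, heq⟩, hlt⟩ := hp
    have h1 : a + b - b = a := by omega
    have h2 : y - x + x = y := by omega
    rw [h1, h2]

/-- Swap bijection `{a > b} ≃ {a < b}` : `(a,b,x,y) ↦ (b,a,y,x)`. -/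
lemma sum_swapab (n : ℕ) (F : ℕ × ℕ × ℕ × ℕ → ℚ) :
    ∑ p ∈ (Qset n).filter (fun p => p.2.1 < p.1), F p
      = ∑ p ∈ (Qset n).filter (fun p => p.1 < p.2.1), F (p.2.1, p.1, p.2.2.2, p.2.2.1) := by
  refine Finset.sum_nbij' (i := fun p => (p.2.1, p.1, p.2.2.2, p.2.2.1))
    (j := fun p => (p.2.1, p.1, p.2.2.2, p.2.2.1)) ?_ ?_ ?_ ?_ ?_
  · rintro ⟨a, b, x, y⟩ hp
    simp only [Finset.mem_filter, mem_Qset] at hp ⊢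
    obtain ⟨⟨ha, hb, hx, hy, heq⟩, hlt⟩ := hp
    exact ⟨⟨hb, ha, hy, hx, by omega⟩, hlt⟩
  · rintro ⟨a, b, x, y⟩ hp
    simp only [Finset.mem_filter, mem_Qset] at hp ⊢
    obtain ⟨⟨ha, hb, hx, hy, heq⟩, hlt⟩ := hp
    exact ⟨⟨hb, ha, hy, hx, by omega⟩, hlt⟩
  · rintro ⟨a, b, x, y⟩ _; rfl
  · rintro ⟨a, b, x, y⟩ _; rfl
  · rintro ⟨a, b, x, y⟩ _; rfl

/-- The diagonal `x = y` gives divisor sums. -/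
lemma sum_xeqy (n : ℕ) (w : ℕ → ℕ → ℚ) (hw0 : ∀ b, w 0 b = 0) :
    ∑ p ∈ (Qset n).filter (fun p => p.2.2.1 = p.2.2.2), w p.1 p.2.1
      = ∑ d ∈ n.divisors, ∑ a ∈ Finset.range d, w a (d - a) := by
  have hin : ∀ d : ℕ, ∑ a ∈ Finset.range d, w a (d - a)
      = ∑ a ∈ (Finset.range d).filter (fun a => 0 < a), w a (d - a) := by
    intro d
    refine (Finset.sum_filter_of_ne ?_).symm
    intro a _ hne
    by_contra h0
    exact hne (by rw [show a = 0 by omega]; exact hw0 _)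
  rw [Finset.sum_congr rfl (fun d _ => hin d), Finset.sum_sigma']
  refine Finset.sum_nbij' (i := fun p => (⟨p.1 + p.2.1, p.1⟩ : Σ _ : ℕ, ℕ))
    (j := fun q => (q.2, q.1 - q.2, n / q.1, n / q.1)) ?_ ?_ ?_ ?_ ?_
  · rintro ⟨a, b, x, y⟩ hp
    simp only [Finset.mem_filter, mem_Qset] at hp
    obtain ⟨⟨ha, hb, hx, hy, heq⟩, hxy⟩ := hp
    subst hxy
    have heq2 : (a + b) * x = n := by
      calc (a + b) * x = a * x + b * x := by ring
        _ = n := heq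
    have hn : n ≠ 0 := by
      have := Nat.mul_pos (by omega : 0 < a + b) hx
      omega
    simp only [Finset.mem_sigma, Nat.mem_divisors, Finset.mem_filter, Finset.mem_range]
    exact ⟨⟨⟨x, heq2.symm⟩, hn⟩, by omega, ha⟩
  · rintro ⟨d, a⟩ hq
    simp only [Finset.mem_sigma, Nat.mem_divisors, Finset.mem_filter, Finset.mem_range] at hq
    obtain ⟨⟨hdvd, hn⟩, had, ha⟩ := hq
    simp only [Finset.mem_filter, mem_Qset]
    have hdpos : 0 < d := by omega
    have hndiv : 0 < n / d := Nat.div_pos (Nat.le_of_dvd (by omega) hdvd) hdpos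
    refine ⟨⟨ha, by omega, hndiv, hndiv, ?_⟩, trivial⟩
    calc a * (n / d) + (d - a) * (n / d) = (a + (d - a)) * (n / d) := by ring
      _ = d * (n / d) := by rw [show a + (d - a) = d by omega]
      _ = n := Nat.mul_div_cancel' hdvd
  · rintro ⟨a, b, x, y⟩ hp
    simp only [Finset.mem_filter, mem_Qset] at hp
    obtain ⟨⟨ha, hb, hx, hy, heq⟩, hxy⟩ := hp
    subst hxy
    have heq2 : (a + b) * x = n := by
      calc (a + b) * x = a * x + b * x := by ring
        _ = n := heq
    have hx2 : n / (a + b) = x := by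
      rw [← heq2, Nat.mul_div_cancel_left x (by omega : 0 < a + b)]
    simp only [Prod.mk.injEq]
    exact ⟨trivial, by omega, hx2, hx2⟩
  · rintro ⟨d, a⟩ hq
    simp only [Finset.mem_sigma, Nat.mem_divisors, Finset.mem_filter, Finset.mem_range] at hq
    obtain ⟨⟨hdvd, hn⟩, had, ha⟩ := hq
    have h1 : a + (d - a) = d := by omega
    simp only [h1]
  · rintro ⟨a, b, x, y⟩ hp
    simp only [Finset.mem_filter, mem_Qset] at hp
    obtain ⟨⟨ha, hb, hx, hy, heq⟩, hxy⟩ := hp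
    have h1 : a + b - a = b := by omega
    simp only [h1]

/-- Three-way partition of a sum by comparison of two ℕ-valued coordinates. -/
lemma sum_tri {α : Type*} (s : Finset α) (f g : α → ℕ) (G : α → ℚ) :
    ∑ p ∈ s, G p = ∑ p ∈ s.filter (fun p => f p < g p), G p
      + ∑ p ∈ s.filter (fun p => f p = g p), G p
      + ∑ p ∈ s.filter (fun p => g p < f p), G p := by
  rw [← Finset.sum_filter_add_sum_filter_not s (fun p => f p < g p) G]
  rw [← Finset.sum_filter_add_sum_filter_not (s.filter (fun p => ¬ f p < g p))
    (fun p => f p = g p) G]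
  rw [Finset.filter_filter, Finset.filter_filter]
  have h1 : Finset.filter (fun a => ¬f a < g a ∧ f a = g a) s
      = Finset.filter (fun a => f a = g a) s := Finset.filter_congr (fun x _ => by omega)
  have h2 : Finset.filter (fun a => ¬f a < g a ∧ ¬f a = g a) s
      = Finset.filter (fun a => g a < f a) s := Finset.filter_congr (fun x _ => by omega)
  rw [h1, h2]
  ring

/-- Liouville's master identity. -/
lemma master (w wt : ℕ → ℕ → ℚ) (k : ℚ)
    (hw0 : ∀ b, w 0 b = 0)
    (h1 : ∀ a c : ℕ, 0 < a → 0 < c →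
      w a (a + c) + w (a + c) a = w a c + w c a + k * (wt a (a + c) + wt (a + c) a))
    (h2 : ∀ a : ℕ, 0 < a → w a a = k * wt a a) (n : ℕ) :
    k * ∑ p ∈ Qset n, wt p.1 p.2.1
      = ∑ d ∈ n.divisors, ∑ a ∈ Finset.range d, w a (d - a) := by
  -- partition of the w-sum by x ? y
  have eq1 := sum_tri (Qset n) (fun p => p.2.2.1) (fun p => p.2.2.2) (fun p => w p.1 p.2.1)
  have eq2 := sum_xgty n (fun p => w p.1 p.2.1)
  have eq3 := sum_xlty n (fun p => w p.1 p.2.1)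
  have eq4 := sum_xeqy n w hw0
  have eq5 := sum_swapab n (fun p => w (p.1 - p.2.1) p.2.1)
  -- partitions by a ? b for w and wt
  have eq6w := sum_tri (Qset n) (fun p => p.1) (fun p => p.2.1) (fun p => w p.1 p.2.1)
  have eq6w' := sum_swapab n (fun p => w p.1 p.2.1)
  have eq6t := sum_tri (Qset n) (fun p => p.1) (fun p => p.2.1) (fun p => wt p.1 p.2.1)
  have eq6t' := sum_swapab n (fun p => wt p.1 p.2.1)
  dsimp only at eq2 eq3 eq5 eq6w' eq6t'
  -- pointwise identities on the regions
  have key1 : ∑ p ∈ (Qset n).filter (fun p => p.1 < p.2.1), k * (wt p.1 p.2.1 + wt p.2.1 p.1)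
      = ∑ p ∈ (Qset n).filter (fun p => p.1 < p.2.1),
          (w p.1 p.2.1 + w p.2.1 p.1 - w p.1 (p.2.1 - p.1) - w (p.2.1 - p.1) p.1) := by
    refine Finset.sum_congr rfl ?_
    rintro ⟨a, b, x, y⟩ hp
    simp only [Finset.mem_filter, mem_Qset] at hp
    obtain ⟨⟨ha, hb, hx, hy, heq⟩, hab⟩ := hp
    have hc : b = a + (b - a) := by omega
    have hpos : 0 < b - a := by omega
    have := h1 a (b - a) ha hpos
    rw [show a + (b - a) = b by omega] at this
    simp only
    linarith [this]
  have key2 : ∑ p ∈ (Qset n).filter (fun p => p.1 = p.2.1), w p.1 p.2.1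
      = ∑ p ∈ (Qset n).filter (fun p => p.1 = p.2.1), k * wt p.1 p.2.1 := by
    refine Finset.sum_congr rfl ?_
    rintro ⟨a, b, x, y⟩ hp
    simp only [Finset.mem_filter, mem_Qset] at hp
    obtain ⟨⟨ha, hb, hx, hy, heq⟩, hab⟩ := hp
    simp only at hab ⊢
    rw [← hab, h2 a ha]
  -- assemble
  have expand : ∀ q : ℚ, q = q := fun q => rfl
  -- w-sum split over a<b region into sums
  have splitw : ∑ p ∈ (Qset n).filter (fun p => p.1 < p.2.1),
      (w p.1 p.2.1 + w p.2.1 p.1 - w p.1 (p.2.1 - p.1) - w (p.2.1 - p.1) p.1)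
      = ∑ p ∈ (Qset n).filter (fun p => p.1 < p.2.1), w p.1 p.2.1
        + ∑ p ∈ (Qset n).filter (fun p => p.1 < p.2.1), w p.2.1 p.1
        - ∑ p ∈ (Qset n).filter (fun p => p.1 < p.2.1), w p.1 (p.2.1 - p.1)
        - ∑ p ∈ (Qset n).filter (fun p => p.1 < p.2.1), w (p.2.1 - p.1) p.1 := by
    rw [← Finset.sum_add_distrib, ← Finset.sum_sub_distrib, ← Finset.sum_sub_distrib]
  have splitk : ∑ p ∈ (Qset n).filter (fun p => p.1 < p.2.1), k * (wt p.1 p.2.1 + wt p.2.1 p.1)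
      = k * (∑ p ∈ (Qset n).filter (fun p => p.1 < p.2.1), wt p.1 p.2.1
        + ∑ p ∈ (Qset n).filter (fun p => p.1 < p.2.1), wt p.2.1 p.1) := by
    rw [mul_add, Finset.mul_sum, Finset.mul_sum, ← Finset.sum_add_distrib]
    exact Finset.sum_congr rfl (fun p _ => by ring)
  have splitk2 : ∑ p ∈ (Qset n).filter (fun p => p.1 = p.2.1), k * wt p.1 p.2.1
      = k * ∑ p ∈ (Qset n).filter (fun p => p.1 = p.2.1), wt p.1 p.2.1 :=
    (Finset.mul_sum _ _ _).symm
  rw [splitw] at key1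
  rw [splitk] at key1
  rw [splitk2] at key2
  linear_combination k * eq6t + k * eq6t' + key1 - key2 - eq6w - eq6w' + eq1 + eq2 + eq3 + eq5 + eq4

/-- Unfolding a product of two divisor-sum series coefficients as a sum over `Qset`. -/
lemma conv (f g : ℕ → ℚ) (n : ℕ) :
    ∑ ij ∈ Finset.HasAntidiagonal.antidiagonal n,
        (∑ a ∈ ij.1.divisors, f a) * (∑ b ∈ ij.2.divisors, g b)
      = ∑ p ∈ Qset n, f p.1 * g p.2.1 := by
  have hexp : ∀ ij : ℕ × ℕ, (∑ a ∈ ij.1.divisors, f a) * (∑ b ∈ ij.2.divisors, g b)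
      = ∑ ab ∈ ij.1.divisors ×ˢ ij.2.divisors, f ab.1 * g ab.2 := by
    intro ij
    rw [Finset.sum_mul_sum, Finset.sum_product]
  rw [Finset.sum_congr rfl (fun ij _ => hexp ij), Finset.sum_sigma']
  refine Finset.sum_nbij' (i := fun q => (q.2.1, q.2.2, q.1.1 / q.2.1, q.1.2 / q.2.2))
    (j := fun p => (⟨(p.1 * p.2.2.1, p.2.1 * p.2.2.2), (p.1, p.2.1)⟩ :
      Σ _ : ℕ × ℕ, ℕ × ℕ)) ?_ ?_ ?_ ?_ ?_
  · rintro ⟨⟨i, j⟩, ⟨a, b⟩⟩ hq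
    simp only [Finset.mem_sigma, Finset.HasAntidiagonal.mem_antidiagonal, Finset.mem_product,
      Nat.mem_divisors] at hq
    obtain ⟨hij, ⟨hai, hine⟩, ⟨hbj, hjne⟩⟩ := hq
    simp only [mem_Qset]
    have ha : 0 < a := by
      rcases Nat.eq_zero_or_pos a with h | h
      · subst h; simp at hai; omega
      · exact h
    have hb : 0 < b := by
      rcases Nat.eq_zero_or_pos b with h | h
      · subst h; simp at hbj; omega
      · exact h
    refine ⟨ha, hb, Nat.div_pos (Nat.le_of_dvd (by omega) hai) ha,
      Nat.div_pos (Nat.le_of_dvd (by omega) hbj) hb, ?_⟩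
    rw [Nat.mul_div_cancel' hai, Nat.mul_div_cancel' hbj]
    exact hij
  · rintro ⟨a, b, x, y⟩ hp
    simp only [mem_Qset] at hp
    obtain ⟨ha, hb, hx, hy, heq⟩ := hp
    simp only [Finset.mem_sigma, Finset.HasAntidiagonal.mem_antidiagonal, Finset.mem_product,
      Nat.mem_divisors]
    exact ⟨heq, ⟨Dvd.intro x rfl, by positivity⟩, ⟨Dvd.intro y rfl, by positivity⟩⟩
  · rintro ⟨⟨i, j⟩, ⟨a, b⟩⟩ hq
    simp only [Finset.mem_sigma, Finset.HasAntidiagonal.mem_antidiagonal, Finset.mem_product,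
      Nat.mem_divisors] at hq
    obtain ⟨hij, ⟨hai, hine⟩, ⟨hbj, hjne⟩⟩ := hq
    simp only
    rw [Nat.mul_div_cancel' hai, Nat.mul_div_cancel' hbj]
  · rintro ⟨a, b, x, y⟩ hp
    simp only [mem_Qset] at hp
    obtain ⟨ha, hb, hx, hy, heq⟩ := hp
    simp only
    rw [Nat.mul_div_cancel_left x ha, Nat.mul_div_cancel_left y hb]
  · rintro ⟨⟨i, j⟩, ⟨a, b⟩⟩ _
    rfl

/-- The divisor-sum power series attached to `f`. -/
noncomputable def Mf (f : ℕ → ℚ) : PowerSeries ℚ :=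
  PowerSeries.mk fun n => ∑ d ∈ n.divisors, f d

lemma coeff_Mf (f : ℕ → ℚ) (n : ℕ) :
    (PowerSeries.coeff n) (Mf f) = ∑ d ∈ n.divisors, f d :=
  PowerSeries.coeff_mk _ _

lemma coeff_Mf_mul (f g : ℕ → ℚ) (n : ℕ) :
    (PowerSeries.coeff n) (Mf f * Mf g) = ∑ p ∈ Qset n, f p.1 * g p.2.1 := by
  rw [PowerSeries.coeff_mul, ← conv f g n]
  exact Finset.sum_congr rfl (fun ij _ => by rw [coeff_Mf, coeff_Mf])

lemma Mf_congr {f g : ℕ → ℚ} (h : ∀ d, d ≠ 0 → f d = g d) : Mf f = Mf g := by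
  apply PowerSeries.ext
  intro n
  rw [coeff_Mf, coeff_Mf]
  refine Finset.sum_congr rfl fun d hd => ?_
  have : d ≠ 0 := Nat.pos_iff_ne_zero.mp (Nat.pos_of_mem_divisors hd)
  exact h d this

/-! ### Pointwise certificate identities for the three Liouville weights -/

lemma hw0W : ∀ b, wW 0 b = 0 := by intro b; simp [wW, ind]

lemma h1W : ∀ a c : ℕ, 0 < a → 0 < c →
    wW a (a + c) + wW (a + c) a
      = wW a c + wW c a + 2 * (o1 a * o1 (a + c) + o1 (a + c) * o1 a) := by
  intro a c _ _
  rcases Nat.mod_two_eq_zero_or_one a with h | h <;>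
    rcases Nat.mod_two_eq_zero_or_one c with h' | h' <;>
      simp [wW, o1, ind, Nat.add_mod, h, h'] <;> push_cast <;> ring

lemma h2W : ∀ a : ℕ, 0 < a → wW a a = 2 * (o1 a * o1 a) := by
  intro a _
  rcases Nat.mod_two_eq_zero_or_one a with h | h <;>
    simp [wW, o1, ind, h] <;> push_cast <;> ring

lemma hw0U : ∀ b, wU 0 b = 0 := by intro b; simp [wU, ind]

lemma h1U : ∀ a c : ℕ, 0 < a → 0 < c →
    wU a (a + c) + wU (a + c) a
      = wU a c + wU c a + 4 * (o1 a * p3 (a + c) + o1 (a + c) * p3 a) := by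
  intro a c _ _
  rcases Nat.mod_two_eq_zero_or_one a with h | h <;>
    rcases Nat.mod_two_eq_zero_or_one c with h' | h' <;>
      simp [wU, o1, p3, ind, Nat.add_mod, h, h'] <;> push_cast <;> ring

lemma h2U : ∀ a : ℕ, 0 < a → wU a a = 4 * (o1 a * p3 a) := by
  intro a _
  rcases Nat.mod_two_eq_zero_or_one a with h | h <;>
    simp [wU, o1, p3, ind, h] <;> push_cast <;> ring

lemma hw0V : ∀ b, wV 0 b = 0 := by intro b; simp [wV, ind]

lemma h1V : ∀ a c : ℕ, 0 < a → 0 < c →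
    wV a (a + c) + wV (a + c) a
      = wV a c + wV c a + 8 * (o1 a * v3 (a + c) + o1 (a + c) * v3 a) := by
  intro a c _ _
  rcases Nat.mod_two_eq_zero_or_one a with h | h <;>
    rcases Nat.mod_two_eq_zero_or_one c with h' | h' <;>
      simp [wV, o1, v3, ind, Nat.add_mod, h, h'] <;> push_cast <;> ring

lemma h2V : ∀ a : ℕ, 0 < a → wV a a = 8 * (o1 a * v3 a) := by
  intro a _
  rcases Nat.mod_two_eq_zero_or_one a with h | h <;>
    simp [wV, o1, v3, ind, h] <;> push_cast <;> ring

/-! ### The three power series relations -/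

lemma relA : 48 * (Mf o1 * Mf o1) + 4 * Mf o1 = 4 * Mf p3 + 2 * Mf v3 := by
  apply PowerSeries.ext; intro n
  have c48 : (48 : PowerSeries ℚ) = PowerSeries.C 48 := (map_ofNat _ _).symm
  have c4 : (4 : PowerSeries ℚ) = PowerSeries.C 4 := (map_ofNat _ _).symm
  have c2 : (2 : PowerSeries ℚ) = PowerSeries.C 2 := (map_ofNat _ _).symm
  rw [c48, c4, c2, map_add, map_add, PowerSeries.coeff_C_mul, PowerSeries.coeff_C_mul,
    PowerSeries.coeff_C_mul, PowerSeries.coeff_C_mul, coeff_Mf_mul, coeff_Mf, coeff_Mf, coeff_Mf]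
  have hm := master wW (fun a b => o1 a * o1 b) 2 hw0W h1W h2W n
  rw [Finset.sum_congr rfl (fun d _ => gW_eval d)] at hm
  have key : ∀ d ∈ n.divisors,
      24 * (if d % 2 = 1 then ((d : ℚ) ^ 3 - d) / 6 else (d : ℚ) ^ 3 / 4) + 4 * o1 d
        = 4 * p3 d + 2 * v3 d := by
    intro d _
    rcases Nat.mod_two_eq_zero_or_one d with h | h <;>
      simp [o1, p3, v3, ind, h] <;> ring
  calc (48 : ℚ) * ∑ p ∈ Qset n, o1 p.1 * o1 p.2.1 + 4 * ∑ d ∈ n.divisors, o1 d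
      = 24 * (2 * ∑ p ∈ Qset n, o1 p.1 * o1 p.2.1) + 4 * ∑ d ∈ n.divisors, o1 d := by ring
    _ = 24 * (∑ d ∈ n.divisors,
          (if d % 2 = 1 then ((d : ℚ) ^ 3 - d) / 6 else (d : ℚ) ^ 3 / 4))
          + 4 * ∑ d ∈ n.divisors, o1 d := by rw [hm]
    _ = ∑ d ∈ n.divisors,
          (24 * (if d % 2 = 1 then ((d : ℚ) ^ 3 - d) / 6 else (d : ℚ) ^ 3 / 4) + 4 * o1 d) := by
        rw [Finset.mul_sum, Finset.mul_sum, ← Finset.sum_add_distrib]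
    _ = ∑ d ∈ n.divisors, (4 * p3 d + 2 * v3 d) := Finset.sum_congr rfl key
    _ = 4 * ∑ d ∈ n.divisors, p3 d + 2 * ∑ d ∈ n.divisors, v3 d := by
        rw [Finset.sum_add_distrib, ← Finset.mul_sum, ← Finset.mul_sum]

lemma relB : 240 * (Mf o1 * Mf p3) + Mf o1 + 10 * Mf p3 + Mf v5 = 11 * Mf p5 := by
  apply PowerSeries.ext; intro n
  have c240 : (240 : PowerSeries ℚ) = PowerSeries.C 240 := (map_ofNat _ _).symm
  have c10 : (10 : PowerSeries ℚ) = PowerSeries.C 10 := (map_ofNat _ _).symm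
  have c11 : (11 : PowerSeries ℚ) = PowerSeries.C 11 := (map_ofNat _ _).symm
  rw [c240, c10, c11, map_add, map_add, map_add, PowerSeries.coeff_C_mul,
    PowerSeries.coeff_C_mul, PowerSeries.coeff_C_mul, coeff_Mf_mul, coeff_Mf, coeff_Mf,
    coeff_Mf, coeff_Mf]
  have hm := master wU (fun a b => o1 a * p3 b) 4 hw0U h1U h2U n
  rw [Finset.sum_congr rfl (fun d _ => gU_eval d)] at hm
  have key : ∀ d ∈ n.divisors,
      60 * (if d % 2 = 1 then (11 * (d : ℚ) ^ 5 - 10 * (d : ℚ) ^ 3 - d) / 60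
        else ((d : ℚ) ^ 5 - (d : ℚ) ^ 3) / 6) + o1 d + 10 * p3 d + v5 d = 11 * p5 d := by
    intro d _
    rcases Nat.mod_two_eq_zero_or_one d with h | h <;>
      simp [o1, p3, p5, v5, ind, h] <;> ring
  calc (240 : ℚ) * ∑ p ∈ Qset n, o1 p.1 * p3 p.2.1 + ∑ d ∈ n.divisors, o1 d
        + 10 * ∑ d ∈ n.divisors, p3 d + ∑ d ∈ n.divisors, v5 d
      = 60 * (4 * ∑ p ∈ Qset n, o1 p.1 * p3 p.2.1) + ∑ d ∈ n.divisors, o1 d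
        + 10 * ∑ d ∈ n.divisors, p3 d + ∑ d ∈ n.divisors, v5 d := by ring
    _ = 60 * (∑ d ∈ n.divisors, (if d % 2 = 1 then (11 * (d : ℚ) ^ 5 - 10 * (d : ℚ) ^ 3 - d) / 60
          else ((d : ℚ) ^ 5 - (d : ℚ) ^ 3) / 6)) + ∑ d ∈ n.divisors, o1 d
        + 10 * ∑ d ∈ n.divisors, p3 d + ∑ d ∈ n.divisors, v5 d := by rw [hm]
    _ = ∑ d ∈ n.divisors,
          (60 * (if d % 2 = 1 then (11 * (d : ℚ) ^ 5 - 10 * (d : ℚ) ^ 3 - d) / 60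
            else ((d : ℚ) ^ 5 - (d : ℚ) ^ 3) / 6) + o1 d + 10 * p3 d + v5 d) := by
        rw [Finset.mul_sum, Finset.mul_sum, ← Finset.sum_add_distrib,
          ← Finset.sum_add_distrib, ← Finset.sum_add_distrib]
    _ = ∑ d ∈ n.divisors, 11 * p5 d := Finset.sum_congr rfl key
    _ = 11 * ∑ d ∈ n.divisors, p5 d := (Finset.mul_sum _ _ _).symm

lemma relC : 1920 * (Mf o1 * Mf v3) + 64 * Mf o1 + 80 * Mf v3 + 44 * Mf v5 = 64 * Mf p5 := by
  apply PowerSeries.ext; intro n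
  have c1920 : (1920 : PowerSeries ℚ) = PowerSeries.C 1920 := (map_ofNat _ _).symm
  have c64 : (64 : PowerSeries ℚ) = PowerSeries.C 64 := (map_ofNat _ _).symm
  have c80 : (80 : PowerSeries ℚ) = PowerSeries.C 80 := (map_ofNat _ _).symm
  have c44 : (44 : PowerSeries ℚ) = PowerSeries.C 44 := (map_ofNat _ _).symm
  rw [c1920, c64, c80, c44, map_add, map_add, map_add, PowerSeries.coeff_C_mul,
    PowerSeries.coeff_C_mul, PowerSeries.coeff_C_mul, PowerSeries.coeff_C_mul,
    PowerSeries.coeff_C_mul, coeff_Mf_mul, coeff_Mf, coeff_Mf, coeff_Mf, coeff_Mf]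
  have hm := master wV (fun a b => o1 a * v3 b) 8 hw0V h1V h2V n
  rw [Finset.sum_congr rfl (fun d _ => gV_eval d)] at hm
  have key : ∀ d ∈ n.divisors,
      240 * (if d % 2 = 1 then (4 : ℚ) / 15 * ((d : ℚ) ^ 5 - d)
        else ((d : ℚ) ^ 5 - 4 * (d : ℚ) ^ 3) / 12) + 64 * o1 d + 80 * v3 d + 44 * v5 d
        = 64 * p5 d := by
    intro d _
    rcases Nat.mod_two_eq_zero_or_one d with h | h <;>
      simp [o1, v3, p5, v5, ind, h] <;> ring
  calc (1920 : ℚ) * ∑ p ∈ Qset n, o1 p.1 * v3 p.2.1 + 64 * ∑ d ∈ n.divisors, o1 d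
        + 80 * ∑ d ∈ n.divisors, v3 d + 44 * ∑ d ∈ n.divisors, v5 d
      = 240 * (8 * ∑ p ∈ Qset n, o1 p.1 * v3 p.2.1) + 64 * ∑ d ∈ n.divisors, o1 d
        + 80 * ∑ d ∈ n.divisors, v3 d + 44 * ∑ d ∈ n.divisors, v5 d := by ring
    _ = 240 * (∑ d ∈ n.divisors, (if d % 2 = 1 then (4 : ℚ) / 15 * ((d : ℚ) ^ 5 - d)
          else ((d : ℚ) ^ 5 - 4 * (d : ℚ) ^ 3) / 12)) + 64 * ∑ d ∈ n.divisors, o1 d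
        + 80 * ∑ d ∈ n.divisors, v3 d + 44 * ∑ d ∈ n.divisors, v5 d := by rw [hm]
    _ = ∑ d ∈ n.divisors,
          (240 * (if d % 2 = 1 then (4 : ℚ) / 15 * ((d : ℚ) ^ 5 - d)
            else ((d : ℚ) ^ 5 - 4 * (d : ℚ) ^ 3) / 12) + 64 * o1 d + 80 * v3 d + 44 * v5 d) := by
        rw [Finset.mul_sum, Finset.mul_sum, Finset.mul_sum, Finset.mul_sum,
          ← Finset.sum_add_distrib, ← Finset.sum_add_distrib, ← Finset.sum_add_distrib]
    _ = ∑ d ∈ n.divisors, 64 * p5 d := Finset.sum_congr rfl key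
    _ = 64 * ∑ d ∈ n.divisors, p5 d := (Finset.mul_sum _ _ _).symm

/-! ### Series representations of `C2Q`, `E4Q`, `E6Q` -/

lemma tau_cast (n : ℕ) : ((tauFn 2 n : ℕ) : ℚ) = ∑ d ∈ n.divisors, o1 d := by
  rw [tauFn]
  push_cast
  rw [Finset.sum_filter]
  refine Finset.sum_congr rfl fun d _ => ?_
  rcases Nat.mod_two_eq_zero_or_one d with h | h <;>
    simp [o1, ind, Nat.two_dvd_ne_zero, h]

lemma sigma3_cast (n : ℕ) : ((sigmaFn 3 n : ℕ) : ℚ) = ∑ d ∈ n.divisors, p3 d := by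
  rw [sigmaFn]; push_cast; rfl

lemma sigma5_cast (n : ℕ) : ((sigmaFn 5 n : ℕ) : ℚ) = ∑ d ∈ n.divisors, p5 d := by
  rw [sigmaFn]; push_cast; rfl

lemma C2Q_eq : C2Q = 1 + 24 * Mf o1 := by
  apply PowerSeries.ext; intro n
  have c24 : (24 : PowerSeries ℚ) = PowerSeries.C 24 := (map_ofNat _ _).symm
  rw [c24, map_add, PowerSeries.coeff_C_mul, coeff_Mf, C2Q, PowerSeries.coeff_mk,
    PowerSeries.coeff_one]
  by_cases hn : n = 0
  · subst hn; simp
  · rw [if_neg hn, if_neg hn, tau_cast]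
    ring

lemma E4Q_eq : E4Q = 1 + 240 * Mf p3 := by
  apply PowerSeries.ext; intro n
  have c240 : (240 : PowerSeries ℚ) = PowerSeries.C 240 := (map_ofNat _ _).symm
  rw [c240, map_add, PowerSeries.coeff_C_mul, coeff_Mf, E4Q, PowerSeries.coeff_mk,
    PowerSeries.coeff_one]
  by_cases hn : n = 0
  · subst hn; simp
  · rw [if_neg hn, if_neg hn, sigma3_cast]
    ring

lemma E6Q_eq : E6Q = 1 - 504 * Mf p5 := by
  apply PowerSeries.ext; intro n
  have c504 : (504 : PowerSeries ℚ) = PowerSeries.C 504 := (map_ofNat _ _).symm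
  rw [c504, map_sub, PowerSeries.coeff_C_mul, coeff_Mf, E6Q, PowerSeries.coeff_mk,
    PowerSeries.coeff_one]
  by_cases hn : n = 0
  · subst hn; simp
  · rw [if_neg hn, if_neg hn, sigma5_cast]
    ring

end E6Aux

/-- In `ℚ⟦q⟧` one has `E₆ = C₂·(4C₂² − 3E₄)`. -/
theorem E6_eq_C2_mul : E6Q = C2Q * (4 * C2Q ^ 2 - 3 * E4Q) := by
  have hA := E6Aux.relA
  have hB := E6Aux.relB
  have hC := E6Aux.relC
  have h105 : (105 : PowerSeries ℚ) * E6Q = 105 * (C2Q * (4 * C2Q ^ 2 - 3 * E4Q)) := by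
    rw [E6Aux.C2Q_eq, E6Aux.E4Q_eq, E6Aux.E6Q_eq]
    linear_combination (-5040 - 120960 * E6Aux.Mf E6Aux.o1) * hA + 5544 * hB - 126 * hC
  have h105ne : (105 : PowerSeries ℚ) ≠ 0 := by
    intro h
    have h2 := congrArg (PowerSeries.constantCoeff) h
    simp only [map_ofNat, map_zero] at h2
    norm_num at h2
  exact mul_left_cancel₀ h105ne h105
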